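/- Let G be a finite group and D : G → M_d(ℂ) an irreducible unitary representation with d ≥ 2. Then there exist a unit vector ψ ∈ ℂ^d and an element g ∈ G such that 0 < |⟨ψ, D(g) ψ⟩| < 1. (This is the mathematical content of the Corollary: for every irreducible representation of a finite group there is a choice of commitment state ψ whose orbit {D(g)ψ} does not form an orthonormal basis, so the corresponding quantum string commitment protocol is nontrivial, i.e., satisfies a + b < n.) -/

import Mathlib

open Matrix BigOperators
open scoped ComplexConjugate Kronecker

noncomputable section

/-- The standard inner product on `ℂ^I` (functions `I → ℂ`), conjugate-linear in the
first argument. -/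
def cinner {I : Type*} [Fintype I] (v w : I → ℂ) : ℂ := ∑ a, conj (v a) * w a

/-- The action of the Kronecker product `A ⊗ B` on `ℂ^d ⊗ ℂ^d`, identified with
the space of functions `Fin d × Fin d → ℂ`. -/
def tensorOp {d : ℕ} (A B : Matrix (Fin d) (Fin d) ℂ) (ψ : Fin d × Fin d → ℂ) :
    Fin d × Fin d → ℂ :=
  fun p => ∑ q : Fin d × Fin d, A p.1 q.1 * B p.2 q.2 * ψ q

/-- The maximally entangled state `Φ_ME`, with `Φ_ME (a, b) = 1/√d` if `a = b` and `0`
otherwise. -/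
def PhiME (d : ℕ) : Fin d × Fin d → ℂ :=
  fun p => if p.1 = p.2 then ((1 / Real.sqrt d : ℝ) : ℂ) else 0

section Helpers
open scoped InnerProductSpace

variable {d : ℕ}

def toE {d : ℕ} (v : Fin d → ℂ) : EuclideanSpace ℂ (Fin d) := WithLp.toLp 2 v

lemma cinner_eq_inner (v w : Fin d → ℂ) :
    cinner v w = @inner ℂ (EuclideanSpace ℂ (Fin d)) _ (toE v) (toE w) := by
  simp [cinner, toE, PiLp.inner_apply, RCLike.inner_apply, mul_comm]

lemma cinner_dot (v w : Fin d → ℂ) : cinner v w = star v ⬝ᵥ w := by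
  simp [cinner, dotProduct]

lemma cinner_conj (v w : Fin d → ℂ) : conj (cinner v w) = cinner w v := by
  simp [cinner, map_sum, mul_comm]

lemma cinner_add_left (u v w : Fin d → ℂ) : cinner (u + v) w = cinner u w + cinner v w := by
  simp [cinner, add_mul, Finset.sum_add_distrib]

lemma cinner_add_right (u v w : Fin d → ℂ) : cinner u (v + w) = cinner u v + cinner u w := by
  simp [cinner, mul_add, Finset.sum_add_distrib]

lemma cinner_smul_left (a : ℂ) (v w : Fin d → ℂ) : cinner (a • v) w = conj a * cinner v w := by
  simp [cinner, Finset.mul_sum, mul_assoc]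

lemma cinner_smul_right (a : ℂ) (v w : Fin d → ℂ) : cinner v (a • w) = a * cinner v w := by
  simp only [cinner, Pi.smul_apply, smul_eq_mul, Finset.mul_sum]
  exact Finset.sum_congr rfl fun i _ => by ring

lemma cinner_mulVec_mulVec {U : Matrix (Fin d) (Fin d) ℂ}
    (hU : U ∈ Matrix.unitaryGroup (Fin d) ℂ) (v w : Fin d → ℂ) :
    cinner (U.mulVec v) (U.mulVec w) = cinner v w := by
  have h1 : star U * U = 1 := hU.1
  rw [cinner_dot, cinner_dot, star_mulVec, ← Matrix.dotProduct_mulVec,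
    Matrix.mulVec_mulVec, ← Matrix.star_eq_conjTranspose, h1, Matrix.one_mulVec]

lemma norm_eq_one_of_cinner (ψ : Fin d → ℂ) (h : cinner ψ ψ = 1) :
    ‖toE ψ‖ = 1 := by
  have h2 : ‖toE ψ‖ ^ 2 = 1 := by
    rw [InnerProductSpace.norm_sq_eq_re_inner (𝕜 := ℂ), ← cinner_eq_inner, h]
    simp
  nlinarith [norm_nonneg (toE ψ)]

lemma cs_le_one {ψ φ : Fin d → ℂ} (h1 : cinner ψ ψ = 1) (h2 : cinner φ φ = 1) :
    ‖cinner ψ φ‖ ≤ 1 := by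
  rw [cinner_eq_inner]
  calc ‖_‖ ≤ ‖toE ψ‖ * ‖toE φ‖ := norm_inner_le_norm (𝕜 := ℂ) _ _
    _ = 1 := by rw [norm_eq_one_of_cinner _ h1, norm_eq_one_of_cinner _ h2, one_mul]

lemma parallel_of_cs_eq {ψ φ : Fin d → ℂ} (h1 : cinner ψ ψ = 1) (h2 : cinner φ φ = 1)
    (h : ‖cinner ψ φ‖ = 1) : ∃ a : ℂ, φ = a • ψ := by
  have hψ0 : toE ψ ≠ 0 := by
    intro hh
    have := norm_eq_one_of_cinner ψ h1
    rw [hh, norm_zero] at this; norm_num at this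
  have hφ0 : toE φ ≠ 0 := by
    intro hh
    have := norm_eq_one_of_cinner φ h2
    rw [hh, norm_zero] at this; norm_num at this
  rw [cinner_eq_inner] at h
  have heq : ‖@inner ℂ (EuclideanSpace ℂ (Fin d)) _ (toE ψ) (toE φ)‖ = ‖toE ψ‖ * ‖toE φ‖ := by
    rw [norm_eq_one_of_cinner _ h1, norm_eq_one_of_cinner _ h2, one_mul, h]
  obtain ⟨r, _, hr⟩ := (norm_inner_eq_norm_iff hψ0 hφ0).mp heq
  exact ⟨r, by simpa [toE] using congrArg WithLp.ofLp hr⟩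

end Helpers

/-- The Corollary: for every irreducible unitary representation of a finite group with
`d ≥ 2` there is a unit vector `ψ` and a group element `g` with
`0 < |⟨ψ, D(g) ψ⟩| < 1`, so the corresponding QSC protocol is nontrivial. -/
theorem nontrivial_protocol_exists (G : Type*) [Group G] [Fintype G] (d : ℕ) (hd : 2 ≤ d)
    (D : G → Matrix (Fin d) (Fin d) ℂ)
    (hDunit : ∀ g, D g ∈ Matrix.unitaryGroup (Fin d) ℂ)
    (hDhom : ∀ g h, D (g * h) = D g * D h)
    (hirr : ∀ p : Submodule ℂ (Fin d → ℂ),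
      (∀ g, ∀ v ∈ p, (D g).mulVec v ∈ p) → p = ⊥ ∨ p = ⊤) :
    ∃ ψ : Fin d → ℂ, cinner ψ ψ = 1 ∧ ∃ g : G,
      0 < ‖cinner ψ ((D g).mulVec ψ)‖ ∧ ‖cinner ψ ((D g).mulVec ψ)‖ < 1 := by
  have i0 : Fin d := ⟨0, by omega⟩
  -- Step 1: find a unit vector and group element with overlap < 1
  have step1 : ∃ g : G, ∃ ψ : Fin d → ℂ, cinner ψ ψ = 1 ∧
      ‖cinner ψ ((D g).mulVec ψ)‖ < 1 := by
    by_contra hcon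
    push_neg at hcon
    set e0 : Fin d → ℂ := Pi.single (⟨0, by omega⟩ : Fin d) 1 with he0
    have he0unit : cinner e0 e0 = 1 := by
      simp [cinner, he0, Pi.single_apply]
    have hkey : ∀ g : G, ∃ a : ℂ, (D g).mulVec e0 = a • e0 := by
      intro g
      have hu : cinner ((D g).mulVec e0) ((D g).mulVec e0) = 1 :=
        (cinner_mulVec_mulVec (hDunit g) e0 e0).trans he0unit
      exact parallel_of_cs_eq he0unit hu
        (le_antisymm (cs_le_one he0unit hu) (hcon g e0 he0unit))
    have hinv : ∀ g, ∀ v ∈ Submodule.span ℂ {e0}, (D g).mulVec v ∈ Submodule.span ℂ {e0} := by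
      intro g v hv
      obtain ⟨c, rfl⟩ := Submodule.mem_span_singleton.mp hv
      obtain ⟨a, ha⟩ := hkey g
      rw [Matrix.mulVec_smul, ha]
      exact Submodule.smul_mem _ _ (Submodule.smul_mem _ _ (Submodule.mem_span_singleton_self _))
    rcases hirr _ hinv with hbot | htop
    · have hmem : e0 ∈ (⊥ : Submodule ℂ (Fin d → ℂ)) :=
        hbot ▸ Submodule.mem_span_singleton_self e0
      have h0 : e0 = 0 := by simpa using hmem
      have := congrFun h0 ⟨0, by omega⟩
      simp [he0] at this
    · have h1 : (Pi.single (⟨1, by omega⟩ : Fin d) 1 : Fin d → ℂ) ∈ Submodule.span ℂ {e0} := by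
        rw [htop]; trivial
      obtain ⟨c, hc⟩ := Submodule.mem_span_singleton.mp h1
      have h2 := congrFun hc ⟨1, by omega⟩
      have hne : (⟨1, by omega⟩ : Fin d) ≠ ⟨0, by omega⟩ := by simp [Fin.ext_iff]
      simp [he0, Pi.single_apply, hne] at h2
  obtain ⟨g, ψ, hψ, hlt⟩ := step1
  by_cases h0 : cinner ψ ((D g).mulVec ψ) = 0
  case neg => exact ⟨ψ, hψ, g, norm_pos_iff.mpr h0, hlt⟩
  -- Main case: the overlap is exactly 0; perturb ψ.
  set u : Fin d → ℂ := (D g).mulVec ψ with hu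
  have huu : cinner u u = 1 := (cinner_mulVec_mulVec (hDunit g) ψ ψ).trans hψ
  have huψ : cinner u ψ = 0 := by rw [← cinner_conj ψ u, h0, map_zero]
  set z : ℂ := cinner ψ ((D g).mulVec u) with hz
  have hUu : cinner ((D g).mulVec u) ((D g).mulVec u) = 1 :=
    (cinner_mulVec_mulVec (hDunit g) u u).trans huu
  have hzle : ‖z‖ ≤ 1 := by rw [hz]; exact cs_le_one hψ hUu
  have huUu : cinner u ((D g).mulVec u) = 0 := by
    rw [hu, cinner_mulVec_mulVec (hDunit g), ← hu, h0]
  set t : ℂ := if z = -1 then Complex.I / 2 else 1 / 2 with ht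
  have htt : conj t * t = 1 / 4 := by
    rw [ht]; split_ifs <;> simp [Complex.ext_iff, map_ofNat] <;> norm_num
  have hT : ‖t‖ = 1 / 2 := by
    rw [ht]; split_ifs <;> simp <;> norm_num
  have h5 : Real.sqrt 5 * Real.sqrt 5 = 5 := Real.mul_self_sqrt (by norm_num)
  set s : ℂ := ((2 / Real.sqrt 5 : ℝ) : ℂ) with hs
  have hss : conj s * s = 4 / 5 := by
    rw [hs, Complex.conj_ofReal, ← Complex.ofReal_mul]
    have h2 : (2 / Real.sqrt 5) * (2 / Real.sqrt 5) = 4 / 5 := by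
      rw [div_mul_div_comm, h5]; norm_num
    rw [h2]; norm_num
  have hnorm' : cinner (s • (ψ + t • u)) (s • (ψ + t • u)) = 1 := by
    simp only [cinner_smul_left, cinner_smul_right, cinner_add_left, cinner_add_right,
      hψ, huu, h0, huψ, mul_zero, zero_mul, mul_one, add_zero, zero_add]
    linear_combination (1 + conj t * t) * hss + (4 / 5 : ℂ) * htt
  have hval : cinner (s • (ψ + t • u)) ((D g).mulVec (s • (ψ + t • u))) =
      (4 / 5 : ℂ) * (t * z + conj t) := by
    rw [Matrix.mulVec_smul, Matrix.mulVec_add, Matrix.mulVec_smul, ← hu]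
    simp only [cinner_smul_left, cinner_smul_right, cinner_add_left, cinner_add_right,
      h0, huψ, huu, huUu, ← hz, mul_zero, zero_mul, mul_one, add_zero, zero_add]
    linear_combination (t * z + conj t) * hss
  have htne : t * z + conj t ≠ 0 := by
    by_cases hzm : z = -1
    · rw [ht, if_pos hzm, hzm]
      intro hq
      rw [show Complex.I / 2 * (-1) + conj (Complex.I / 2) = -Complex.I by
        rw [map_div₀, Complex.conj_I, map_ofNat]; ring] at hq
      simp [Complex.ext_iff] at hq
    · rw [ht, if_neg hzm]
      intro hq
      apply hzm
      have hc : conj ((1 : ℂ) / 2) = 1 / 2 := by rw [map_div₀, _root_.map_one, map_ofNat]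
      rw [hc] at hq
      linear_combination 2 * hq
  have h45 : ‖((4 : ℂ) / 5)‖ = 4 / 5 := by norm_num
  refine ⟨s • (ψ + t • u), hnorm', g, ?_, ?_⟩
  · rw [hval]
    exact norm_pos_iff.mpr (mul_ne_zero (by norm_num) htne)
  · rw [hval, norm_mul, h45]
    have hb : ‖t * z + conj t‖ ≤ 1 := by
      calc ‖t * z + conj t‖ ≤ ‖t * z‖ + ‖conj t‖ := norm_add_le _ _
        _ = ‖t‖ * ‖z‖ + ‖t‖ := by rw [norm_mul, RCLike.norm_conj]
        _ ≤ (1 / 2) * 1 + 1 / 2 := by rw [hT]; gcongr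
        _ = 1 := by norm_num
    calc (4 / 5 : ℝ) * ‖t * z + conj t‖ ≤ (4 / 5) * 1 := by gcongr
      _ < 1 := by norm_num
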